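/- Under the Macho-Stadler et al. weights, for every permutation π the induced probability of a partition P is pr^{α^{MSt}}_π(P) = (Π_{T∈P, T≠∅} (|T|−1)!)/|N|!, which equals the probability that a uniformly random permutation of N has cycle-type partition P (i.e., its decomposition into disjoint cycles induces the set partition P). -/

import Mathlib

open Finset

open scoped Classical

/-- A partition of the player set `Fin n`; following the paper's convention,
`∅` is a member of every partition. -/
def IsPartition {n : ℕ} (P : Finset (Finset (Fin n))) : Prop :=
  ∅ ∈ P ∧ ∀ a : Fin n, ∃! B : Finset (Fin n), B ∈ P ∧ a ∈ B

/-- The set `𝒫` of all partitions of `Fin n`. -/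
noncomputable def allPartitions (n : ℕ) : Finset (Finset (Finset (Fin n))) :=
  Finset.univ.filter IsPartition

/-- `C_i^π`: the set of players appearing after `i` in the ordering `π`. -/
def Cafter {n : ℕ} (π : Equiv.Perm (Fin n)) (i : Fin n) : Finset (Fin n) :=
  Finset.univ.filter fun j => π.symm i < π.symm j

/-- `P_{[S]}` : the partition obtained from `P` by merging all members of `S`
into a single coalition. -/
def pmerge {n : ℕ} (P : Finset (Finset (Fin n))) (S : Finset (Fin n)) :
    Finset (Finset (Fin n)) :=
  P.image (· \ S) ∪ {S}

/-- `τ_i^T(P)` : the partition obtained from `P` by transferring `i` from its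
coalition to the coalition `T` (taking `T = ∅` means that `i` forms a new
singleton coalition). -/
def moveTo {n : ℕ} (P : Finset (Finset (Fin n))) (i : Fin n) (T : Finset (Fin n)) :
    Finset (Finset (Fin n)) :=
  ((P.erase T).image fun B => B.erase i) ∪ {insert i T} ∪ {∅}

/-- A partition-function game: a real value for every (embedded) coalition. -/
abbrev Game (n : ℕ) := Finset (Fin n) → Finset (Finset (Fin n)) → ℝ

/-- A system of weights `α_i(S, P)` (meaningful for `i ∉ S`). -/
abbrev Weights (n : ℕ) := Fin n → Finset (Fin n) → Finset (Finset (Fin n)) → ℝ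

/-- The partition `{N, ∅}` in which the grand coalition is embedded. -/
def grandPart (n : ℕ) : Finset (Finset (Fin n)) := {Finset.univ, ∅}

/-- Normalization: for every embedded coalition `(S, P)` with `i ∈ S`,
`∑_{T ∈ P_{−S}} α_i(S_{−i}, τ_i^T(P)) = 1`. -/
def Normalized {n : ℕ} (w : Weights n) : Prop :=
  ∀ (i : Fin n) (S : Finset (Fin n)) (P : Finset (Finset (Fin n))),
    IsPartition P → S ∈ P → i ∈ S →
      ∑ T ∈ P.erase S, w i (S.erase i) (moveTo P i T) = 1

/-- Weights take values in `[0, 1]`. -/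
def InRange {n : ℕ} (w : Weights n) : Prop :=
  ∀ (i : Fin n) (S : Finset (Fin n)) (P : Finset (Finset (Fin n))),
    i ∉ S → 0 ≤ w i S P ∧ w i S P ≤ 1

/-- `pr^α_π(P) = ∏_{i ∈ N} α_i(C_i^π, P_{[C_i^π]})`. -/
noncomputable def pr {n : ℕ} (w : Weights n) (π : Equiv.Perm (Fin n))
    (P : Finset (Finset (Fin n))) : ℝ :=
  ∏ i : Fin n, w i (Cafter π i) (pmerge P (Cafter π i))

/-- The extended Shapley value `φ^α` (formula (1) of the paper). -/
noncomputable def esv {n : ℕ} (w : Weights n) (v : Game n) (i : Fin n) : ℝ :=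
  ((n.factorial : ℝ))⁻¹ * ∑ π : Equiv.Perm (Fin n), ∑ P ∈ allPartitions n,
    pr w π P *
      (v (insert i (Cafter π i)) (pmerge P (insert i (Cafter π i))) -
        v (Cafter π i) (pmerge P (Cafter π i)))

/-- The `α`-marginal contribution `[mc^α_i(v)](S, P)`. -/
noncomputable def mc {n : ℕ} (w : Weights n) (v : Game n) (i : Fin n)
    (S : Finset (Fin n)) (P : Finset (Finset (Fin n))) : ℝ :=
  ∑ T ∈ P.erase S, w i (S.erase i) (moveTo P i T) * (v S P - v (S.erase i) (moveTo P i T))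

/-- A genuine partition-function game: it vanishes off embedded coalitions
(and on the empty coalition). -/
def IsGame {n : ℕ} (v : Game n) : Prop :=
  ∀ S P, ¬ (IsPartition P ∧ S ∈ P ∧ S ≠ ∅) → v S P = 0

/-- The simple game `e^{(S₀, P₀)}`. -/
noncomputable def sgame {n : ℕ} (S₀ : Finset (Fin n)) (P₀ : Finset (Finset (Fin n))) :
    Game n :=
  fun S P => if S = S₀ ∧ P = P₀ then 1 else 0

/-- The permuted game `π(v)`, with `π(v)(S, P) = v(π(S), π(P))`. -/
def permGame {n : ℕ} (π : Equiv.Perm (Fin n)) (v : Game n) : Game n :=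
  fun S P => v (S.image π) (P.image (Finset.image π))

/-- The block of `P` containing `i`. -/
noncomputable def blockOf {n : ℕ} (P : Finset (Finset (Fin n))) (i : Fin n) :
    Finset (Fin n) :=
  (P.filter fun B => i ∈ B).sup id

/-- The Macho-Stadler et al. weights. -/
noncomputable def wMSt (n : ℕ) : Weights n := fun i S P =>
  if 1 < (blockOf P i).card then
    (((blockOf P i).card : ℝ) - 1) / ((n : ℝ) - (S.card : ℝ))
  else 1 / ((n : ℝ) - (S.card : ℝ))

/-- The partition of `Fin n` into the orbits (cycles) of a permutation `σ`
(together with `∅`). -/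
noncomputable def cyclePartition {n : ℕ} (σ : Equiv.Perm (Fin n)) :
    Finset (Finset (Fin n)) :=
  insert ∅ (Finset.univ.image fun i : Fin n =>
    Finset.univ.filter fun j : Fin n => σ.SameCycle i j)


open Fin.NatCast in
lemma finRotate_pow_apply (k m : ℕ) (a : Fin (k + 1)) :
    ((finRotate (k + 1)) ^ m) a = a + (m : Fin (k + 1)) := by
  induction m with
  | zero => simp
  | succ m ih =>
      rw [pow_succ', Equiv.Perm.mul_apply, ih, finRotate_succ_apply]
      push_cast
      exact add_assoc _ _ _

lemma full_isCycleOn {α : Type*} [Fintype α] {c : Equiv.Perm α}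
    (h : ∀ a b : α, c.SameCycle a b) :
    c.IsCycleOn (↑(Finset.univ : Finset α) : Set α) := by
  rw [Finset.coe_univ]
  exact ⟨c.bijective.bijOn_univ, fun a _ b _ => h a b⟩

lemma full_pow_eq_iff {α : Type*} [Fintype α] [Nonempty α] {c : Equiv.Perm α}
    (h : ∀ a b : α, c.SameCycle a b) (a : α) (m : ℕ) :
    (c ^ m) a = a ↔ Fintype.card α ∣ m := by
  have := (full_isCycleOn h).pow_apply_eq (Finset.mem_univ a) (n := m)
  simpa [Finset.card_univ] using this

lemma full_pow_inj_le {α : Type*} [Fintype α] [Nonempty α] {c : Equiv.Perm α}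
    (h : ∀ a b : α, c.SameCycle a b) {p q : ℕ} (hpq : p ≤ q)
    (hq : q < Fintype.card α) (a : α)
    (he : (c ^ p) a = (c ^ q) a) : p = q := by
  have h1 : (c ^ (q - p)) ((c ^ p) a) = (c ^ p) a := by
    rw [← Equiv.Perm.mul_apply, ← pow_add, Nat.sub_add_cancel hpq, ← he]
  have := (full_pow_eq_iff h _ _).1 h1
  rcases Nat.eq_zero_or_pos (q - p) with hz | hz
  · omega
  · have := Nat.le_of_dvd hz this
    omega

lemma full_pow_inj {α : Type*} [Fintype α] [Nonempty α] {c : Equiv.Perm α}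
    (h : ∀ a b : α, c.SameCycle a b) {p q : ℕ}
    (hp : p < Fintype.card α) (hq : q < Fintype.card α) (a : α)
    (he : (c ^ p) a = (c ^ q) a) : p = q := by
  rcases le_total p q with hle | hle
  · exact full_pow_inj_le h hle hq a he
  · exact (full_pow_inj_le h hle hp a he.symm).symm

lemma permCongr_mul {β α : Type*} (E : β ≃ α) (f g : Equiv.Perm β) :
    E.permCongr f * E.permCongr g = E.permCongr (f * g) := by
  ext x
  simp [Equiv.permCongr_apply, Equiv.Perm.mul_apply]

lemma permCongr_pow {β α : Type*} (E : β ≃ α) (f : Equiv.Perm β) (m : ℕ) :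
    (E.permCongr f) ^ m = E.permCongr (f ^ m) := by
  induction m with
  | zero => ext x; simp
  | succ m ih => rw [pow_succ, ih, permCongr_mul, ← pow_succ]

open Fin.NatCast in
lemma card_fullCycles (α : Type*) [Fintype α] [DecidableEq α] [Nonempty α] :
    Nat.card {c : Equiv.Perm α // ∀ a b : α, c.SameCycle a b} =
      (Fintype.card α - 1).factorial := by
  obtain ⟨k, hk⟩ : ∃ k, Fintype.card α = k + 1 :=
    ⟨Fintype.card α - 1, (Nat.succ_pred_eq_of_pos Fintype.card_pos).symm⟩
  have a₀ : α := Classical.arbitrary α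
  have hne : ∀ (c : Equiv.Perm α) (_ : ∀ a b : α, c.SameCycle a b) (j : Fin k),
      (c ^ ((j : ℕ) + 1)) a₀ ≠ a₀ := by
    intro c hc j hj
    have := (full_pow_eq_iff hc a₀ _).1 hj
    rw [hk] at this
    have hj1 : (j : ℕ) + 1 < k + 1 := by omega
    have := Nat.le_of_dvd (by omega) this
    omega
  set F : {c : Equiv.Perm α // ∀ a b : α, c.SameCycle a b} →
      (Fin k ↪ {y : α // y ≠ a₀}) := fun c =>
    ⟨fun j => ⟨(c.1 ^ ((j : ℕ) + 1)) a₀, hne c.1 c.2 j⟩, by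
      intro i j hij
      have := congrArg Subtype.val hij
      have hi := i.isLt
      have hj' := j.isLt
      have := full_pow_inj c.2 (p := (i : ℕ) + 1) (q := (j : ℕ) + 1)
        (by omega) (by omega) a₀ this
      exact Fin.ext (by omega)⟩ with hF
  have hbij : Function.Bijective F := by
    constructor
    · rintro ⟨c, hc⟩ ⟨c', hc'⟩ hcc
      have key : ∀ m : ℕ, m < k + 1 → (c ^ m) a₀ = (c' ^ m) a₀ := by
        intro m hm
        match m with
        | 0 => simp
        | (j + 1) =>
          have hj : j < k := by omega
          have := congrFun (congrArg (fun (f : Fin k ↪ {y : α // y ≠ a₀}) =>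
            (f : Fin k → {y : α // y ≠ a₀})) hcc) ⟨j, hj⟩
          exact congrArg Subtype.val this
      ext x
      obtain ⟨m, hm, rfl⟩ : ∃ m < k + 1, (c ^ m) a₀ = x := by
        have := (full_isCycleOn hc).exists_pow_eq (Finset.mem_univ a₀) (Finset.mem_univ x)
        simpa [Finset.card_univ, hk] using this
      have h1 : c ((c ^ m) a₀) = (c ^ (m + 1)) a₀ := by
        rw [pow_succ', Equiv.Perm.mul_apply]
      have h2 : c' ((c ^ m) a₀) = (c' ^ (m + 1)) a₀ := by
        rw [key m hm, pow_succ', Equiv.Perm.mul_apply]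
      rw [h1, h2]
      rcases Nat.lt_or_ge (m + 1) (k + 1) with hlt | hge
      · exact key _ hlt
      · have hm1 : m + 1 = k + 1 := by omega
        rw [hm1, (full_pow_eq_iff hc a₀ _).2 (by rw [hk]),
          (full_pow_eq_iff hc' a₀ _).2 (by rw [hk])]
    · intro f
      have hcard : Fintype.card {y : α // y ≠ a₀} = k := by
        have := Set.card_ne_eq a₀ (α := α)
        rw [hk] at this
        simp [hk]
      have hbf : Function.Bijective f :=
        (Fintype.bijective_iff_injective_and_card f).2
          ⟨f.injective, by simp [hcard]⟩
      set e₀ : Fin k ≃ {y : α // y ≠ a₀} := Equiv.ofBijective f hbf with he₀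
      set E₂ := (Equiv.optionSubtype a₀).symm e₀ with hE₂
      set E : Fin (k + 1) ≃ α := (finSuccEquiv k).trans E₂.val with hEdef
      have hE0 : E 0 = a₀ := by
        simp [hEdef, finSuccEquiv_zero, E₂.prop]
      have hEs : ∀ j : Fin k, E j.succ = (f j : α) := by
        intro j
        simp [hEdef, finSuccEquiv_succ, hE₂, he₀]
      set c : Equiv.Perm α := E.permCongr (finRotate (k + 1)) with hc
      have hcpow : ∀ (m : ℕ) (x : α),
          (c ^ m) x = E (E.symm x + (m : Fin (k + 1))) := by
        intro m x
        rw [hc, permCongr_pow, Equiv.permCongr_apply, finRotate_pow_apply]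
      have hfull : ∀ a b : α, c.SameCycle a b := by
        intro a b
        refine ⟨((E.symm b - E.symm a : Fin (k + 1)) : ℕ), ?_⟩
        rw [zpow_natCast, hcpow, Fin.cast_val_eq_self, add_sub_cancel,
          Equiv.apply_symm_apply]
      refine ⟨⟨c, hfull⟩, ?_⟩
      ext j
      simp only [hF, Function.Embedding.coeFn_mk]
      show (c ^ ((j : ℕ) + 1)) a₀ = (f j : α)
      rw [hcpow]
      have hsymm : E.symm a₀ = 0 := by rw [← hE0, Equiv.symm_apply_apply]
      rw [hsymm, zero_add]
      rw [← hEs j]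
      congr 1
      ext
      simp [Fin.val_cast_of_lt (show (j : ℕ) + 1 < k + 1 by omega)]
  rw [Nat.card_eq_of_bijective F hbij, Nat.card_eq_fintype_card,
    Fintype.card_embedding_eq]
  have hcard : Fintype.card {y : α // y ≠ a₀} = k := by
    have := Set.card_ne_eq a₀ (α := α)
    rw [hk] at this
    simp [hk]
  rw [hcard, Fintype.card_fin, Nat.descFactorial_self, hk]
  simp

section Helpers
variable {n : ℕ}

lemma blockOf_eq {P : Finset (Finset (Fin n))} (hP : IsPartition P)
    {B : Finset (Fin n)} {i : Fin n} (hB : B ∈ P) (hi : i ∈ B) :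
    blockOf P i = B := by
  have huniq := hP.2 i
  obtain ⟨C, ⟨hC, hiC⟩, hun⟩ := huniq
  have hBC : B = C := hun B ⟨hB, hi⟩
  subst hBC
  have : P.filter (fun D => i ∈ D) = {B} := by
    ext D
    simp only [Finset.mem_filter, Finset.mem_singleton]
    constructor
    · rintro ⟨h1, h2⟩; exact hun D ⟨h1, h2⟩
    · rintro rfl; exact ⟨hB, hi⟩
  rw [blockOf, this, Finset.sup_singleton, id]

lemma blockOf_mem {P : Finset (Finset (Fin n))} (hP : IsPartition P) (i : Fin n) :
    blockOf P i ∈ P ∧ i ∈ blockOf P i := by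
  obtain ⟨C, ⟨hC, hiC⟩, _⟩ := hP.2 i
  rw [blockOf_eq hP hC hiC]
  exact ⟨hC, hiC⟩

lemma blockOf_pmerge {P : Finset (Finset (Fin n))} (hP : IsPartition P)
    {S : Finset (Fin n)} {i : Fin n} (hi : i ∉ S) :
    blockOf (pmerge P S) i = blockOf P i \ S := by
  obtain ⟨hBP, hiB⟩ := blockOf_mem hP i
  have hfil : (pmerge P S).filter (fun D => i ∈ D) = {blockOf P i \ S} := by
    ext D
    simp only [Finset.mem_filter, Finset.mem_singleton, pmerge, Finset.mem_union,
      Finset.mem_image, Finset.mem_singleton]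
    constructor
    · rintro ⟨hD | rfl, hiD⟩
      · obtain ⟨C, hC, rfl⟩ := hD
        have hiC : i ∈ C := (Finset.mem_sdiff.1 hiD).1
        rw [blockOf_eq hP hC hiC]
      · exact absurd hiD hi
    · rintro rfl
      exact ⟨Or.inl ⟨blockOf P i, hBP, rfl⟩, Finset.mem_sdiff.2 ⟨hiB, hi⟩⟩
  rw [blockOf, hfil, Finset.sup_singleton, id]

end Helpers

section Part1
variable {n : ℕ}

lemma mem_Cafter_iff (π : Equiv.Perm (Fin n)) (i j : Fin n) :
    j ∈ Cafter π i ↔ π.symm i < π.symm j := by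
  simp [Cafter]

lemma not_mem_Cafter (π : Equiv.Perm (Fin n)) (i : Fin n) : i ∉ Cafter π i := by
  simp [Cafter]

lemma card_Cafter (π : Equiv.Perm (Fin n)) (i : Fin n) :
    (Cafter π i).card = n - 1 - (π.symm i : ℕ) := by
  have h1 : (Cafter π i).card
      = (Finset.univ.filter fun j : Fin n => π.symm i < j).card := by
    apply Finset.card_equiv π.symm
    intro j
    simp [Cafter]
  have h2 : (Finset.univ.filter fun j : Fin n => π.symm i < j)
      = Finset.Ioi (π.symm i) := by
    ext j; simp
  rw [h1, h2, Fin.card_Ioi]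

lemma denom_Cafter (π : Equiv.Perm (Fin n)) (i : Fin n) :
    (n : ℝ) - ((Cafter π i).card : ℝ) = ((π.symm i : ℕ) : ℝ) + 1 := by
  have hlt : (π.symm i : ℕ) < n := (π.symm i).isLt
  rw [card_Cafter]
  have h : n - 1 - (π.symm i : ℕ) = n - ((π.symm i : ℕ) + 1) := by omega
  rw [h, Nat.cast_sub (by omega)]
  push_cast
  ring

lemma mst_rank_prod (f : Fin n → Fin n) (hf : Function.Injective f)
    (T : Finset (Fin n)) :
    ∏ i ∈ T, (if 1 < (T.filter fun j => f j ≤ f i).card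
        then ((T.filter fun j => f j ≤ f i).card : ℝ) - 1 else 1)
      = ((T.card - 1).factorial : ℝ) := by
  induction T using Finset.strongInduction with
  | _ T ih =>
    rcases Finset.eq_empty_or_nonempty T with rfl | hT
    · simp
    · obtain ⟨i₀, hi₀, hmax⟩ := T.exists_max_image f hT
      set T' := T.erase i₀ with hT'
      have hfe : ∀ i ∈ T', (T.filter fun j => f j ≤ f i)
          = T'.filter fun j => f j ≤ f i := by
        intro i hi
        ext j
        simp only [Finset.mem_filter, hT', Finset.mem_erase]
        constructor
        · rintro ⟨hjT, hji⟩
          refine ⟨⟨?_, hjT⟩, hji⟩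
          rintro rfl
          have h1 : f i ≤ f j := hmax i (Finset.mem_of_mem_erase hi)
          have : i = j := hf (le_antisymm h1 hji)
          subst this
          exact (Finset.mem_erase.1 hi).1 rfl
        · rintro ⟨⟨_, hjT⟩, hji⟩
          exact ⟨hjT, hji⟩
      have hfi₀ : (T.filter fun j => f j ≤ f i₀) = T :=
        Finset.filter_true_of_mem fun j hj => hmax j hj
      rw [← Finset.mul_prod_erase _ _ hi₀, hfi₀]
      rw [Finset.prod_congr rfl fun i hi => by rw [hfe i hi]]
      rw [ih T' (Finset.erase_ssubset hi₀), Finset.card_erase_of_mem hi₀]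
      have ht1 : 1 ≤ T.card := Finset.card_pos.2 hT
      by_cases h2 : T.card = 1
      · rw [h2]; norm_num
      · have h3 : 2 ≤ T.card := by omega
        rw [if_pos (by omega)]
        obtain ⟨m, hm⟩ : ∃ m, T.card = m + 2 := ⟨T.card - 2, by omega⟩
        rw [hm]
        push_cast [show m + 2 - 1 - 1 = m by omega, show m + 2 - 1 = m + 1 by omega,
          Nat.factorial_succ]
        ring

lemma univ_eq_biUnion {P : Finset (Finset (Fin n))} (hP : IsPartition P) :
    (Finset.univ : Finset (Fin n)) = (P.erase ∅).biUnion id := by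
  ext x
  simp only [Finset.mem_univ, true_iff, Finset.mem_biUnion, Finset.mem_erase, id]
  obtain ⟨hB, hx⟩ := blockOf_mem hP x
  exact ⟨blockOf P x, ⟨fun h => by simp [h] at hx, hB⟩, hx⟩

lemma blocks_disjoint {P : Finset (Finset (Fin n))} (hP : IsPartition P) :
    (↑(P.erase ∅) : Set (Finset (Fin n))).PairwiseDisjoint id := by
  intro T₁ h₁ T₂ h₂ hne
  simp only [Finset.coe_erase, Set.mem_diff, Finset.mem_coe] at h₁ h₂
  simp only [Function.onFun, id]
  rw [Finset.disjoint_left]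
  intro x hx₁ hx₂
  exact hne ((blockOf_eq hP h₁.1 hx₁).symm.trans (blockOf_eq hP h₂.1 hx₂))

lemma part1 (π : Equiv.Perm (Fin n)) (P : Finset (Finset (Fin n)))
    (hP : IsPartition P) :
    pr (wMSt n) π P =
      (∏ T ∈ P.erase ∅, ((T.card - 1).factorial : ℝ)) / (n.factorial : ℝ) := by
  have hterm : ∀ i : Fin n,
      wMSt n i (Cafter π i) (pmerge P (Cafter π i)) =
        (if 1 < (blockOf P i \ Cafter π i).card
          then ((blockOf P i \ Cafter π i).card : ℝ) - 1 else 1) /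
          (((π.symm i : ℕ) : ℝ) + 1) := by
    intro i
    rw [wMSt, blockOf_pmerge hP (not_mem_Cafter π i), ← denom_Cafter π i]
    exact (apply_ite (fun y : ℝ => y / ((n : ℝ) - ((Cafter π i).card : ℝ))) _ _ _).symm
  rw [pr, Finset.prod_congr rfl fun i _ => hterm i, Finset.prod_div_distrib]
  have hden : ∏ i : Fin n, (((π.symm i : ℕ) : ℝ) + 1) = (n.factorial : ℝ) := by
    rw [Equiv.prod_comp π.symm (fun j : Fin n => ((j : ℕ) : ℝ) + 1)]
    have : ∏ i : Fin n, (((i : ℕ) : ℝ) + 1) = ((∏ i : Fin n, ((i : ℕ) + 1) : ℕ) : ℝ) := by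
      push_cast; rfl
    rw [this, Fin.prod_univ_eq_prod_range (fun i => i + 1) n,
      Finset.prod_range_add_one_eq_factorial]
  rw [hden]
  congr 1
  rw [show (Finset.univ : Finset (Fin n)) = (P.erase ∅).biUnion id from univ_eq_biUnion hP,
    Finset.prod_biUnion (blocks_disjoint hP)]
  apply Finset.prod_congr rfl
  intro T hT
  have hTP : T ∈ P := Finset.mem_of_mem_erase hT
  have hblock : ∀ i ∈ T, blockOf P i \ Cafter π i
      = T.filter fun j => π.symm j ≤ π.symm i := by
    intro i hi
    rw [blockOf_eq hP hTP hi]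
    ext j
    simp [Cafter, not_lt]
  calc ∏ i ∈ (id T : Finset (Fin n)),
        (if 1 < (blockOf P i \ Cafter π i).card
          then ((blockOf P i \ Cafter π i).card : ℝ) - 1 else 1)
      = ∏ i ∈ T, (if 1 < (T.filter fun j => π.symm j ≤ π.symm i).card
          then ((T.filter fun j => π.symm j ≤ π.symm i).card : ℝ) - 1 else 1) :=
        Finset.prod_congr rfl fun i hi => by rw [hblock i hi]
    _ = ((T.card - 1).factorial : ℝ) := mst_rank_prod π.symm π.symm.injective T

end Part1

section Part2
variable {n : ℕ}

noncomputable def orbitF (σ : Equiv.Perm (Fin n)) (i : Fin n) : Finset (Fin n) :=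
  Finset.univ.filter fun j => σ.SameCycle i j

lemma cyclePartition_eq_iff {P : Finset (Finset (Fin n))} (hP : IsPartition P)
    (σ : Equiv.Perm (Fin n)) :
    cyclePartition σ = P ↔ ∀ i, orbitF σ i = blockOf P i := by
  constructor
  · intro h i
    have hmem : orbitF σ i ∈ P := by
      rw [← h, cyclePartition]
      exact Finset.mem_insert_of_mem (Finset.mem_image_of_mem _ (Finset.mem_univ i))
    have hiC : i ∈ orbitF σ i := by
      simp only [orbitF, Finset.mem_filter, Finset.mem_univ, true_and]
      exact ⟨0, by simp⟩
    exact (blockOf_eq hP hmem hiC).symm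
  · intro h
    rw [cyclePartition]
    ext C
    simp only [Finset.mem_insert, Finset.mem_image, Finset.mem_univ, true_and]
    constructor
    · rintro (rfl | ⟨i, rfl⟩)
      · exact hP.1
      · rw [show (Finset.univ.filter fun j => σ.SameCycle i j) = orbitF σ i from rfl, h i]
        exact (blockOf_mem hP i).1
    · intro hC
      rcases Finset.eq_empty_or_nonempty C with rfl | ⟨i, hi⟩
      · exact Or.inl rfl
      · refine Or.inr ⟨i, ?_⟩
        have h2 := h i
        rw [orbitF] at h2
        rw [h2, blockOf_eq hP hC hi]

lemma pow_restrict_val (σ : Equiv.Perm (Fin n)) (T : Finset (Fin n))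
    (c : Equiv.Perm {x : Fin n // x ∈ T})
    (h : ∀ (x : Fin n) (hx : x ∈ T), σ x = (c ⟨x, hx⟩ : {x : Fin n // x ∈ T}).val) :
    ∀ (m : ℕ) (x : Fin n) (hx : x ∈ T), (σ ^ m) x = ((c ^ m) ⟨x, hx⟩).val := by
  intro m
  induction m with
  | zero => intro x hx; simp
  | succ m ih =>
      intro x hx
      rw [pow_succ, Equiv.Perm.mul_apply, pow_succ, Equiv.Perm.mul_apply,
        h x hx, ih _ (c ⟨x, hx⟩).2]

lemma count_orbit (P : Finset (Finset (Fin n))) (hP : IsPartition P) :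
    Nat.card {σ : Equiv.Perm (Fin n) // ∀ i, orbitF σ i = blockOf P i}
      = ∏ T ∈ P.erase ∅, (T.card - 1).factorial := by
  classical
  -- basic facts about σ satisfying the orbit condition
  have hstep : ∀ (σ : Equiv.Perm (Fin n)) (_ : ∀ i, orbitF σ i = blockOf P i)
      (x : Fin n), σ x ∈ blockOf P x := by
    intro σ hσ x
    rw [← hσ x]
    simp only [orbitF, Finset.mem_filter, Finset.mem_univ, true_and]
    exact ⟨1, by simp⟩
  have hblocksame : ∀ (σ : Equiv.Perm (Fin n)) (_ : ∀ i, orbitF σ i = blockOf P i)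
      (x : Fin n), blockOf P (σ x) = blockOf P x := by
    intro σ hσ x
    rw [← hσ x, ← hσ (σ x)]
    ext j
    simp [orbitF, Equiv.Perm.sameCycle_apply_left]
  have hpres : ∀ (σ : Equiv.Perm (Fin n)) (_ : ∀ i, orbitF σ i = blockOf P i)
      (T : Finset (Fin n)) (_ : T ∈ P) (x : Fin n), x ∈ T ↔ σ x ∈ T := by
    intro σ hσ T hT x
    constructor
    · intro hx
      rw [← blockOf_eq hP hT hx, ← hblocksame σ hσ x]
      exact (blockOf_mem hP (σ x)).2
    · intro hx
      rw [← blockOf_eq hP hT hx, hblocksame σ hσ x]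
      exact (blockOf_mem hP x).2
  set G : {σ : Equiv.Perm (Fin n) // ∀ i, orbitF σ i = blockOf P i} →
      (∀ T : {T : Finset (Fin n) // T ∈ P.erase ∅},
        {c : Equiv.Perm {x : Fin n // x ∈ T.1} //
          ∀ a b : {x : Fin n // x ∈ T.1}, c.SameCycle a b}) := fun σ T =>
    ⟨Equiv.Perm.subtypePerm σ.1
        (fun x => (hpres σ.1 σ.2 T.1 (Finset.mem_of_mem_erase T.2) x).symm), by
      intro a b
      have hTP : T.1 ∈ P := Finset.mem_of_mem_erase T.2
      have hsc : σ.1.SameCycle a.1 b.1 := by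
        have hb : b.1 ∈ orbitF σ.1 a.1 := by
          rw [σ.2 a.1, blockOf_eq hP hTP a.2]
          exact b.2
        simpa [orbitF] using hb
      obtain ⟨m, _, hm⟩ := hsc.exists_pow_eq'
      refine ⟨(m : ℤ), ?_⟩
      rw [zpow_natCast]
      apply Subtype.ext
      rw [← pow_restrict_val σ.1 T.1 _ (fun x hx => rfl) m a.1 a.2]
      exact hm⟩ with hG
  have hGbij : Function.Bijective G := by
    constructor
    · rintro ⟨σ, hσ⟩ ⟨σ', hσ'⟩ hGG
      have hx : ∀ x : Fin n, σ x = σ' x := by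
        intro x
        have hB : blockOf P x ∈ P.erase ∅ := by
          refine Finset.mem_erase.2 ⟨?_, (blockOf_mem hP x).1⟩
          intro h0
          have := (blockOf_mem hP x).2
          rw [h0] at this
          exact absurd this (Finset.notMem_empty x)
        have h1 := congrFun hGG ⟨blockOf P x, hB⟩
        have h2 := congrArg Subtype.val h1
        have h3 := congrFun (congrArg (fun (e : Equiv.Perm _) => (e : _ → _)) h2)
          ⟨x, (blockOf_mem hP x).2⟩
        exact congrArg Subtype.val h3
      exact Subtype.ext (Equiv.ext hx)
    · intro c
      set c' : Finset (Fin n) → Equiv.Perm (Fin n) := fun T =>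
        if h : T ∈ P.erase ∅ then Equiv.Perm.ofSubtype (c ⟨T, h⟩).1 else 1 with hc'
      have hc'app : ∀ (T : Finset (Fin n)) (hT : T ∈ P.erase ∅) (x : Fin n)
          (hx : x ∈ T), c' T x = ((c ⟨T, hT⟩).1 ⟨x, hx⟩).val := by
        intro T hT x hx
        rw [hc']
        simp only [dif_pos hT]
        exact Equiv.Perm.ofSubtype_apply_of_mem _ hx
      have hBx : ∀ x : Fin n, blockOf P x ∈ P.erase ∅ := by
        intro x
        refine Finset.mem_erase.2 ⟨?_, (blockOf_mem hP x).1⟩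
        intro h0
        have := (blockOf_mem hP x).2
        rw [h0] at this
        exact absurd this (Finset.notMem_empty x)
      set φ : Fin n → Fin n := fun x => c' (blockOf P x) x with hφ
      have hφmem : ∀ x : Fin n, φ x ∈ blockOf P x := by
        intro x
        rw [hφ]
        simp only
        rw [hc'app _ (hBx x) x (blockOf_mem hP x).2]
        exact ((c ⟨blockOf P x, hBx x⟩).1 ⟨x, _⟩).2
      have hφinj : Function.Injective φ := by
        intro x y hxy
        have hBeq : blockOf P x = blockOf P y := by
          have h1 : blockOf P (φ x) = blockOf P x :=
            blockOf_eq hP (blockOf_mem hP x).1 (hφmem x)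
          have h2 : blockOf P (φ y) = blockOf P y :=
            blockOf_eq hP (blockOf_mem hP y).1 (hφmem y)
          rw [← h1, ← h2, hxy]
        have h1 : c' (blockOf P x) x = c' (blockOf P y) y := hxy
        rw [← hBeq] at h1
        exact (c' (blockOf P x)).injective h1
      obtain ⟨σ0, hσ0⟩ : ∃ σ0 : Equiv.Perm (Fin n), ∀ x, σ0 x = φ x :=
        ⟨Equiv.ofBijective φ (Finite.injective_iff_bijective.1 hφinj), fun x => rfl⟩
      have hσstep : ∀ (T : Finset (Fin n)) (hT : T ∈ P.erase ∅) (x : Fin n)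
          (hx : x ∈ T), σ0 x = ((c ⟨T, hT⟩).1 ⟨x, hx⟩).val := by
        intro T hT x hx
        have hBT : blockOf P x = T :=
          blockOf_eq hP (Finset.mem_of_mem_erase hT) hx
        rw [hσ0, hφ]
        simp only
        rw [← hc'app T hT x hx, hBT]
      have horb : ∀ i, orbitF σ0 i = blockOf P i := by
        intro i
        ext j
        simp only [orbitF, Finset.mem_filter, Finset.mem_univ, true_and]
        have hB := hBx i
        constructor
        · intro hsc
          obtain ⟨m, _, hm⟩ := hsc.exists_pow_eq'
          rw [pow_restrict_val σ0 (blockOf P i) (c ⟨blockOf P i, hB⟩).1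
            (fun x hx => hσstep _ hB x hx) m i (blockOf_mem hP i).2] at hm
          rw [← hm]
          exact (((c ⟨blockOf P i, hB⟩).1 ^ m) ⟨i, _⟩).2
        · intro hj
          have hfull := (c ⟨blockOf P i, hB⟩).2 ⟨i, (blockOf_mem hP i).2⟩ ⟨j, hj⟩
          obtain ⟨m, _, hm⟩ := hfull.exists_pow_eq'
          refine ⟨(m : ℤ), ?_⟩
          rw [zpow_natCast, pow_restrict_val σ0 (blockOf P i) (c ⟨blockOf P i, hB⟩).1
            (fun x hx => hσstep _ hB x hx) m i (blockOf_mem hP i).2, hm]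
      refine ⟨⟨σ0, horb⟩, ?_⟩
      funext T
      apply Subtype.ext
      apply Equiv.ext
      rintro ⟨x, hx⟩
      apply Subtype.ext
      have := hσstep T.1 T.2 x hx
      simpa [hG] using this
  rw [Nat.card_eq_of_bijective G hGbij, Nat.card_pi]
  rw [← Finset.prod_coe_sort (P.erase ∅) (fun T => (T.card - 1).factorial)]
  apply Finset.prod_congr rfl
  intro T _
  have hne : T.1.Nonempty := by
    rcases Finset.eq_empty_or_nonempty T.1 with h | h
    · exact absurd (h ▸ T.2) (fun hh => (Finset.mem_erase.1 hh).1 rfl)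
    · exact h
  have : Nonempty {x : Fin n // x ∈ T.1} := ⟨⟨hne.choose, hne.choose_spec⟩⟩
  rw [card_fullCycles, Fintype.card_coe]

end Part2

/-- Under the Macho-Stadler et al. weights, for every permutation `π` the
induced probability of a partition `P` is `(∏_{T∈P} (|T|−1)!)/n!`, which is
the probability that a uniformly random permutation of `N` has cycle-type
partition `P`. -/
theorem stmt15 (n : ℕ) (π : Equiv.Perm (Fin n)) (P : Finset (Finset (Fin n)))
    (hP : IsPartition P) :
    pr (wMSt n) π P =
      (∏ T ∈ P.erase ∅, ((T.card - 1).factorial : ℝ)) / (n.factorial : ℝ) ∧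
    pr (wMSt n) π P =
      ((Finset.univ.filter fun σ : Equiv.Perm (Fin n) => cyclePartition σ = P).card : ℝ) /
        (n.factorial : ℝ) := by
  have h1 := part1 π P hP
  refine ⟨h1, ?_⟩
  rw [h1]
  congr 1
  have hcount : (Finset.univ.filter fun σ : Equiv.Perm (Fin n) => cyclePartition σ = P).card
      = ∏ T ∈ P.erase ∅, (T.card - 1).factorial := by
    rw [← count_orbit P hP,
      ← Nat.card_congr (Equiv.subtypeEquivRight fun σ => cyclePartition_eq_iff hP σ),
      Nat.card_eq_fintype_card, Fintype.card_subtype]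
  rw [hcount]
  exact (Nat.cast_prod _ _).symm
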